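/- arXiv:2505.15283 — 3 statements merged into one kernel-verified Lean document; each statement's English description precedes it below -/
import Mathlib

section
/- Let μ be a probability measure on ℝ with finite mean m̄, Ω₋ = {x ≤ m̄}, Ω₊ = {x > m̄}, with μ(Ω±) > 0 and conditional means m̄₋, m̄₊. Then W₁(μ, δ_{m̄}) ≤ √((m̄₊ − m̄)(m̄ − m̄₋)). -/
open MeasureTheory
open scoped ENNReal NNReal

/-- The Wasserstein-1 distance between two Borel measures on `ℝ`,
defined as the infimum over all couplings `γ` of the transport cost. -/
noncomputable def W1 (μ ν : Measure ℝ) : ENNReal :=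
  ⨅ (γ : Measure (ℝ × ℝ)) (_ : γ.map Prod.fst = μ ∧ γ.map Prod.snd = ν),
    ∫⁻ p, edist p.1 p.2 ∂γ

lemma key_real (a b m mm mp : ℝ) (ha : 0 < a) (hb : 0 < b) (hab : a + b = 1)
    (hm : a*mm + b*mp = m) (hmmle : mm ≤ m) (hmple : m ≤ mp) :
    2*b*(mp - m) ≤ Real.sqrt ((mp-m)*(m-mm)) := by
  have h1 : mp - m = a*(mp-mm) := by linear_combination hm - mp*hab
  have h2 : m - mm = b*(mp-mm) := by linear_combination -hm + mm*hab
  have hd : 0 ≤ mp - mm := by linarith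
  have : (mp-m)*(m-mm) = (a*b)*(mp-mm)^2 := by rw [h1, h2]; ring
  rw [this, Real.sqrt_mul (by positivity), Real.sqrt_sq hd]
  set s := Real.sqrt (a*b) with hs
  have hs2 : s^2 = a*b := Real.sq_sqrt (by positivity)
  have hsle : s ≤ 1/2 := by
    rw [show (1:ℝ)/2 = Real.sqrt ((1/2)^2) by rw [Real.sqrt_sq]; norm_num]
    apply Real.sqrt_le_sqrt; nlinarith [sq_nonneg (a-b)]
  have hs0 : 0 ≤ s := Real.sqrt_nonneg _
  calc 2*b*(mp-m) = 2*(a*b)*(mp-mm) := by rw [h1]; ring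
    _ = 2*s^2*(mp-mm) := by rw [hs2]
    _ ≤ s*(mp-mm) := by
        nlinarith [mul_nonneg (mul_nonneg hs0 hd) (by linarith : (0:ℝ) ≤ 1 - 2*s)]

theorem W1_dirac_mean_le_sqrt (μ : Measure ℝ) [IsProbabilityMeasure μ]
    (hμ : Integrable (fun t : ℝ => t) μ)
    (m : ℝ) (hmean : m = ∫ t, t ∂μ)
    (hminus : 0 < μ {x : ℝ | x ≤ m}) (hplus : 0 < μ {x : ℝ | m < x})
    (mminus mplus : ℝ)
    (hmm : mminus = (∫ x in {x : ℝ | x ≤ m}, x ∂μ) / (μ {x : ℝ | x ≤ m}).toReal)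
    (hmp : mplus = (∫ x in {x : ℝ | m < x}, x ∂μ) / (μ {x : ℝ | m < x}).toReal) :
    W1 μ (Measure.dirac m) ≤
      ENNReal.ofReal (Real.sqrt ((mplus - m) * (m - mminus))) := by
  -- Step 1: W1 bounded by the trivial coupling
  have hf : Measurable (fun x : ℝ => (x, m)) := measurable_id.prodMk measurable_const
  have h1 : (μ.map (fun x : ℝ => (x, m))).map Prod.fst = μ := by
    rw [Measure.map_map measurable_fst hf]
    simp only [Function.comp_def]
    exact Measure.map_id'
  have h2 : (μ.map (fun x : ℝ => (x, m))).map Prod.snd = Measure.dirac m := by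
    rw [Measure.map_map measurable_snd hf]
    simp only [Function.comp_def, Measure.map_const, measure_univ, one_smul]
  have hi : Integrable (fun x : ℝ => |x - m|) μ := (hμ.sub (integrable_const m)).abs
  have step1 : W1 μ (Measure.dirac m) ≤ ENNReal.ofReal (∫ x, |x - m| ∂μ) := by
    unfold W1
    refine le_trans (iInf₂_le (μ.map (fun x : ℝ => (x, m))) ⟨h1, h2⟩) ?_
    rw [lintegral_map (by fun_prop) hf,
      MeasureTheory.ofReal_integral_eq_lintegral_ofReal hi
        (Filter.Eventually.of_forall fun x => abs_nonneg _)]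
    simp_rw [edist_dist, Real.dist_eq]
    exact le_rfl
  refine le_trans step1 (ENNReal.ofReal_le_ofReal ?_)
  -- Step 2: real estimate
  have hSeq : {x : ℝ | x ≤ m} = Set.Iic m := rfl
  have hTeq : {x : ℝ | m < x} = Set.Ioi m := rfl
  rw [hSeq] at hminus hmm
  rw [hTeq] at hplus hmp
  have hS : MeasurableSet (Set.Iic m) := measurableSet_Iic
  have hcompl : (Set.Iic m)ᶜ = Set.Ioi m := Set.compl_Iic
  set a := (μ (Set.Iic m)).toReal with ha_def
  set b := (μ (Set.Ioi m)).toReal with hb_def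
  have ha : 0 < a := ENNReal.toReal_pos hminus.ne' (measure_ne_top _ _)
  have hb : 0 < b := ENNReal.toReal_pos hplus.ne' (measure_ne_top _ _)
  have hab : a + b = 1 := by
    rw [ha_def, hb_def, ← ENNReal.toReal_add (measure_ne_top _ _) (measure_ne_top _ _),
      ← hcompl, measure_add_measure_compl hS]
    simp
  set Im := ∫ x in Set.Iic m, x ∂μ with hIm
  set Ip := ∫ x in Set.Ioi m, x ∂μ with hIp
  have hsplit : Im + Ip = m := by
    rw [hIm, hIp, ← hcompl, integral_add_compl hS hμ, hmean]
  have hamm : a * mminus = Im := by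
    rw [hmm, mul_div_cancel₀ _ ha.ne']
  have hbmp : b * mplus = Ip := by
    rw [hmp, mul_div_cancel₀ _ hb.ne']
  have hm : a * mminus + b * mplus = m := by rw [hamm, hbmp]; exact hsplit
  -- conditional mean inequalities
  have hImle : Im ≤ a * m := by
    have : Im ≤ ∫ _ in Set.Iic m, m ∂μ :=
      setIntegral_mono_on hμ.integrableOn (integrable_const m).integrableOn hS
        (fun x hx => hx)
    simpa [mul_comm, Measure.real, ha_def] using this
  have hIpge : b * m ≤ Ip := by
    have : (∫ _ in Set.Ioi m, m ∂μ) ≤ Ip :=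
      setIntegral_mono_on (integrable_const m).integrableOn hμ.integrableOn
        measurableSet_Ioi (fun x hx => le_of_lt hx)
    simpa [mul_comm, Measure.real, hb_def] using this
  have hmmle : mminus ≤ m := by
    rw [hmm, div_le_iff₀ ha]; linarith [hImle]
  have hmple : m ≤ mplus := by
    rw [hmp, le_div_iff₀ hb]; linarith [hIpge]
  -- compute the integral of |x - m|
  have habs : ∫ x, |x - m| ∂μ = 2*b*(mplus - m) := by
    rw [← integral_add_compl hS hi, hcompl]
    have e1 : ∫ x in Set.Iic m, |x - m| ∂μ = ∫ x in Set.Iic m, (m - x) ∂μ := by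
      refine setIntegral_congr_fun hS (fun x hx => ?_)
      have hx' : x ≤ m := hx
      rw [abs_of_nonpos (sub_nonpos.2 hx')]; ring
    have e2 : ∫ x in Set.Ioi m, |x - m| ∂μ = ∫ x in Set.Ioi m, (x - m) ∂μ := by
      refine setIntegral_congr_fun measurableSet_Ioi (fun x hx => ?_)
      have hx' : m < x := hx
      exact abs_of_nonneg (by linarith)
    rw [e1, e2, integral_sub (integrable_const m).integrableOn hμ.integrableOn,
      integral_sub hμ.integrableOn (integrable_const m).integrableOn,
      setIntegral_const, setIntegral_const]
    simp only [smul_eq_mul, Measure.real, ← ha_def, ← hb_def, ← hIm, ← hIp]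
    linear_combination -2*hbmp - hsplit + m*hab
  rw [habs]
  exact key_real a b m mminus mplus ha hb hab hm hmmle hmple
end

section
/- Let μ be a continuous probability measure with supp(μ) ⊆ [a,b], −∞ < a < b < ∞, and let T be the mean-split quantization algorithm (split function f(μ) = mean of μ). Then for every n ≥ 0, W₁(μ, T(μ,n)) ≤ (b−a)/2^{n+1}. -/
open MeasureTheory
open scoped ENNReal NNReal

/-- The conditional (normalized restricted) measure of `μ` on `s`. -/
noncomputable def condOn (μ : Measure ℝ) (s : Set ℝ) : Measure ℝ :=
  (μ s)⁻¹ • μ.restrict s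

open Classical in
/-- The divide-and-conquer quantization algorithm driven by a split function `f`. -/
noncomputable def T (f : Measure ℝ → ℝ) : ℕ → Measure ℝ → Measure ℝ
  | 0, μ => Measure.dirac (f μ)
  | n + 1, μ =>
    if μ {x | x ≤ f μ} = 0 ∨ μ {x | f μ < x} = 0 then Measure.dirac (f μ)
    else
      μ {x | x ≤ f μ} • T f n (condOn μ {x | x ≤ f μ}) +
        μ {x | f μ < x} • T f n (condOn μ {x | f μ < x})

section Aux
variable {μ : Measure ℝ} {a b : ℝ}

/-- AM-GM sqrt: √(p*q) ≤ (p+q)/2 for p,q ≥ 0. -/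
lemma sqrt_mul_le (p q : ℝ) (hp : 0 ≤ p) (hq : 0 ≤ q) :
    Real.sqrt (p * q) ≤ (p + q) / 2 := by
  have h := Real.sqrt_le_sqrt (show p * q ≤ ((p+q)/2)^2 by nlinarith [sq_nonneg (p - q)])
  rwa [Real.sqrt_sq (by positivity)] at h

/-- Key split inequality: for 0 ≤ c ≤ A, c ≤ B,
    √(c(A−c)) + √(c(B−c)) ≤ √(A·B). -/
lemma sqrt_split (A B c : ℝ) (hc : 0 ≤ c) (hcA : c ≤ A) (hcB : c ≤ B) :
    Real.sqrt (c * (A - c)) + Real.sqrt (c * (B - c)) ≤ Real.sqrt (A * B) := by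
  have hA : 0 ≤ A - c := by linarith
  have hB : 0 ≤ B - c := by linarith
  have h1 : Real.sqrt (c * (A - c)) * Real.sqrt (c * (B - c))
      = Real.sqrt ((c * (A-c)) * (c * (B-c))) := (Real.sqrt_mul (by positivity) _).symm
  have h2 : (c * (A-c)) * (c * (B-c)) = (c^2) * ((A-c)*(B-c)) := by ring
  have h3 : Real.sqrt ((c^2) * ((A-c)*(B-c))) ≤ (c^2 + (A-c)*(B-c)) / 2 :=
    sqrt_mul_le _ _ (by positivity) (by positivity)
  have hsq : (Real.sqrt (c * (A - c)) + Real.sqrt (c * (B - c)))^2 ≤ A * B := by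
    have e1 : Real.sqrt (c * (A - c))^2 = c * (A-c) := Real.sq_sqrt (by positivity)
    have e2 : Real.sqrt (c * (B - c))^2 = c * (B-c) := Real.sq_sqrt (by positivity)
    have := h1 ▸ h2 ▸ h3
    nlinarith [this, e1, e2]
  calc Real.sqrt (c * (A - c)) + Real.sqrt (c * (B - c))
      = Real.sqrt ((Real.sqrt (c * (A - c)) + Real.sqrt (c * (B - c)))^2) :=
        (Real.sqrt_sq (by positivity)).symm
    _ ≤ Real.sqrt (A * B) := Real.sqrt_le_sqrt hsq

lemma sqrt_smul (P y : ℝ) (hP : 0 ≤ P) : P * Real.sqrt y = Real.sqrt (P^2 * y) := by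
  rw [Real.sqrt_mul (sq_nonneg P), Real.sqrt_sq hP]

lemma step_arith (a b m mm mp P Q : ℝ)
    (h1 : a ≤ mm) (h2 : mm ≤ m) (h3 : m ≤ mp) (h4 : mp ≤ b)
    (hP : 0 ≤ P) (hQ : 0 ≤ Q) (hPQ : P + Q = 1)
    (hc : P * (m - mm) = Q * (mp - m)) :
    P * Real.sqrt ((mm - a) * (m - mm)) + Q * Real.sqrt ((mp - m) * (b - mp))
      ≤ Real.sqrt ((m - a) * (b - m)) / 2 := by
  have huv : 0 ≤ (m - a) * (b - m) :=
    mul_nonneg (by linarith) (by linarith)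
  obtain ⟨c, hc1, hc2⟩ : ∃ c, c = P * (m - mm) ∧ c = Q * (mp - m) := ⟨_, rfl, hc⟩
  obtain ⟨A, hA⟩ : ∃ A, A = P * (m - a) := ⟨_, rfl⟩
  obtain ⟨B, hB⟩ : ∃ B, B = Q * (b - m) := ⟨_, rfl⟩
  have hc0 : 0 ≤ c := hc1 ▸ mul_nonneg hP (by linarith)
  have hcA : c ≤ A := by
    rw [hc1, hA]; apply mul_le_mul_of_nonneg_left _ hP; linarith
  have hcB : c ≤ B := by
    rw [hc2, hB]; apply mul_le_mul_of_nonneg_left _ hQ; linarith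
  have e1 : P * Real.sqrt ((mm - a) * (m - mm)) = Real.sqrt (c * (A - c)) := by
    rw [sqrt_smul _ _ hP]; congr 1; rw [hc1, hA]; ring
  have e2 : Q * Real.sqrt ((mp - m) * (b - mp)) = Real.sqrt (c * (B - c)) := by
    rw [sqrt_smul _ _ hQ]; congr 1; rw [hc2, hB]; ring
  rw [e1, e2]
  refine (sqrt_split A B c hc0 hcA hcB).trans ?_
  have h14 : P * Q ≤ 1/4 := by nlinarith [sq_nonneg (P - Q)]
  have hPQ4 : A * B ≤ ((m - a) * (b - m)) * (1/2)^2 := by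
    rw [hA, hB]
    nlinarith [mul_le_mul_of_nonneg_right h14 huv]
  refine (Real.sqrt_le_sqrt hPQ4).trans ?_
  rw [Real.sqrt_mul huv, Real.sqrt_sq (by norm_num)]
  ring_nf
  exact le_refl _

lemma ae_mem_Icc (hsupp : μ (Set.Icc a b)ᶜ = 0) : ∀ᵐ x ∂μ, x ∈ Set.Icc a b := by
  have : (Set.Icc a b)ᶜ = {x | ¬ x ∈ Set.Icc a b} := rfl
  rw [ae_iff]
  rw [this] at hsupp
  exact hsupp

lemma integrable_id' [IsFiniteMeasure μ] (hsupp : μ (Set.Icc a b)ᶜ = 0) :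
    Integrable (fun x : ℝ => x) μ := by
  refine ⟨measurable_id.aestronglyMeasurable, HasFiniteIntegral.of_bounded (C := max |a| |b|) ?_⟩
  filter_upwards [ae_mem_Icc hsupp] with x hx
  rw [Real.norm_eq_abs]
  exact abs_le_max_abs_abs hx.1 hx.2

lemma mean_mem_Icc [IsProbabilityMeasure μ] (hsupp : μ (Set.Icc a b)ᶜ = 0) :
    (∫ t, t ∂μ) ∈ Set.Icc a b := by
  constructor
  · have h := integral_mono_ae (integrable_const a) (integrable_id' hsupp)
      ((ae_mem_Icc hsupp).mono fun x hx => hx.1)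
    simpa using h
  · have h := integral_mono_ae (integrable_id' hsupp) (integrable_const b)
      ((ae_mem_Icc hsupp).mono fun x hx => hx.2)
    simpa using h

lemma E_le_sqrt [IsProbabilityMeasure μ] (hsupp : μ (Set.Icc a b)ᶜ = 0) :
    (∫ x, |x - ∫ t, t ∂μ| ∂μ)
      ≤ Real.sqrt (((∫ t, t ∂μ) - a) * (b - (∫ t, t ∂μ))) := by
  set m := ∫ t, t ∂μ with hm
  obtain ⟨hma, hmb⟩ := mean_mem_Icc hsupp
  have hid := integrable_id' hsupp
  have Isub : Integrable (fun x => x - m) μ := hid.sub (integrable_const m)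
  have Isub' : Integrable (fun x => m - x) μ := (integrable_const m).sub hid
  have Ipos : Integrable (fun x => max (x - m) 0) μ := Isub.pos_part
  have Ineg : Integrable (fun x => max (m - x) 0) μ := Isub'.pos_part
  -- the integral of (x - m) is zero
  have hzero : ∫ x, (x - m) ∂μ = 0 := by
    rw [integral_sub hid (integrable_const m), integral_const]
    simp [hm]
  have hsplit : ∫ x, (x - m) ∂μ
      = (∫ x, max (x - m) 0 ∂μ) - ∫ x, max (m - x) 0 ∂μ := by
    rw [← integral_sub Ipos Ineg]
    congr 1 with x
    rcases le_total x m with h | h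
    · rw [max_eq_right (by linarith), max_eq_left (by linarith)]; ring
    · rw [max_eq_left (by linarith), max_eq_right (by linarith)]; ring
  have habs : ∫ x, |x - m| ∂μ
      = (∫ x, max (x - m) 0 ∂μ) + ∫ x, max (m - x) 0 ∂μ := by
    rw [← integral_add Ipos Ineg]
    congr 1 with x
    rcases le_total x m with h | h
    · rw [abs_of_nonpos (by linarith), max_eq_right (by linarith),
        max_eq_left (by linarith)]; ring
    · rw [abs_of_nonneg (by linarith), max_eq_left (by linarith),
        max_eq_right (by linarith)]; ring
  have heq : ∫ x, max (x - m) 0 ∂μ = ∫ x, max (m - x) 0 ∂μ := by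
    have := hzero ▸ hsplit
    linarith
  set P := (μ {x : ℝ | x ≤ m}).toReal with hP
  set Q := (μ {x : ℝ | m < x}).toReal with hQ
  have hmeas : MeasurableSet {x : ℝ | x ≤ m} := measurableSet_Iic
  have hmeas' : MeasurableSet {x : ℝ | m < x} := measurableSet_Ioi
  have hPQ : P + Q = 1 := by
    rw [hP, hQ, ← ENNReal.toReal_add (measure_ne_top _ _) (measure_ne_top _ _)]
    have : {x : ℝ | m < x} = {x : ℝ | x ≤ m}ᶜ := by ext x; simp [not_le]
    rw [this, measure_add_measure_compl hmeas]
    simp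
  have hP0 : 0 ≤ P := ENNReal.toReal_nonneg
  have hQ0 : 0 ≤ Q := ENNReal.toReal_nonneg
  -- pointwise bounds
  have hposle : ∫ x, max (x - m) 0 ∂μ ≤ (b - m) * Q := by
    have hint : Integrable ({x : ℝ | m < x}.indicator fun _ => b - m) μ :=
      (integrable_const (b - m)).indicator hmeas'
    have hb : ∀ᵐ x ∂μ, max (x - m) 0 ≤ {x : ℝ | m < x}.indicator (fun _ => b - m) x := by
      filter_upwards [ae_mem_Icc hsupp] with x hx
      rcases le_or_gt x m with h | h
      · rw [max_eq_right (by linarith)]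
        exact Set.indicator_nonneg (fun _ _ => by linarith) x
      · rw [max_eq_left (by linarith), Set.indicator_of_mem (by exact h)]
        linarith [hx.2]
    calc ∫ x, max (x - m) 0 ∂μ ≤ ∫ x, {x : ℝ | m < x}.indicator (fun _ => b - m) x ∂μ :=
          integral_mono_ae Ipos hint hb
      _ = (b - m) * Q := by
          rw [integral_indicator_const _ hmeas']
          simp [hQ, mul_comm, Measure.real]
  have hnegle : ∫ x, max (m - x) 0 ∂μ ≤ (m - a) * P := by
    have hint : Integrable ({x : ℝ | x ≤ m}.indicator fun _ => m - a) μ :=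
      (integrable_const (m - a)).indicator hmeas
    have hb : ∀ᵐ x ∂μ, max (m - x) 0 ≤ {x : ℝ | x ≤ m}.indicator (fun _ => m - a) x := by
      filter_upwards [ae_mem_Icc hsupp] with x hx
      rcases le_or_gt m x with h | h
      · rw [max_eq_right (by linarith)]
        exact Set.indicator_nonneg (fun _ _ => by linarith) x
      · rw [max_eq_left (by linarith), Set.indicator_of_mem (by exact h.le)]
        linarith [hx.1]
    calc ∫ x, max (m - x) 0 ∂μ ≤ ∫ x, {x : ℝ | x ≤ m}.indicator (fun _ => m - a) x ∂μ :=
          integral_mono_ae Ineg hint hb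
      _ = (m - a) * P := by
          rw [integral_indicator_const _ hmeas]
          simp [hP, mul_comm, Measure.real]
  have hposnn : 0 ≤ ∫ x, max (x - m) 0 ∂μ :=
    integral_nonneg fun x => le_max_right _ _
  have hnegnn : 0 ≤ ∫ x, max (m - x) 0 ∂μ :=
    integral_nonneg fun x => le_max_right _ _
  have hPQ4 : P * Q ≤ 1/4 := by nlinarith [sq_nonneg (P - Q)]
  rw [habs]
  rw [Real.le_sqrt (by linarith) (by nlinarith)]
  rw [heq]
  have huv : (0:ℝ) ≤ (m - a) * (b - m) := mul_nonneg (by linarith) (by linarith)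
  have h1 : (∫ x, max (m - x) 0 ∂μ) * (∫ x, max (x - m) 0 ∂μ)
      ≤ ((m - a) * P) * ((b - m) * Q) :=
    mul_le_mul hnegle hposle hposnn (mul_nonneg (by linarith) hP0)
  rw [heq] at h1
  have h2 : ((m - a) * P) * ((b - m) * Q) ≤ ((m - a) * (b - m)) * (1/4) := by
    nlinarith [mul_le_mul_of_nonneg_left hPQ4 huv]
  nlinarith [h1, h2]

lemma W1_le_coupling {μ ν : Measure ℝ} (γ : Measure (ℝ × ℝ))
    (h : γ.map Prod.fst = μ ∧ γ.map Prod.snd = ν) :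
    W1 μ ν ≤ ∫⁻ p, edist p.1 p.2 ∂γ :=
  iInf₂_le γ h

lemma W1_dirac_le {μ : Measure ℝ} [IsProbabilityMeasure μ] (m : ℝ)
    (hint : Integrable (fun x => |x - m|) μ) :
    W1 μ (Measure.dirac m) ≤ ENNReal.ofReal (∫ x, |x - m| ∂μ) := by
  have hmeas : Measurable (fun x : ℝ => (x, m)) := measurable_id.prodMk measurable_const
  have h1 : (μ.map (fun x : ℝ => (x, m))).map Prod.fst = μ := by
    rw [Measure.map_map measurable_fst hmeas]
    have h : (Prod.fst ∘ fun x : ℝ => (x, m)) = id := rfl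
    rw [h, Measure.map_id]
  have h2 : (μ.map (fun x : ℝ => (x, m))).map Prod.snd = Measure.dirac m := by
    rw [Measure.map_map measurable_snd hmeas]
    have : (Prod.snd ∘ fun x : ℝ => (x, m)) = fun _ : ℝ => m := rfl
    rw [this, Measure.map_const]
    simp
  refine (W1_le_coupling _ ⟨h1, h2⟩).trans ?_
  rw [lintegral_map (measurable_fst.edist measurable_snd) hmeas]
  have : ∀ x : ℝ, edist x m = ENNReal.ofReal |x - m| := by
    intro x; rw [edist_dist, Real.dist_eq]
  simp_rw [this]
  rw [← ofReal_integral_eq_lintegral_ofReal hint (ae_of_all _ fun x => abs_nonneg _)]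

lemma W1_add_le {μ₁ μ₂ ν₁ ν₂ : Measure ℝ} :
    W1 (μ₁ + μ₂) (ν₁ + ν₂) ≤ W1 μ₁ ν₁ + W1 μ₂ ν₂ := by
  conv_rhs => rw [W1, W1]
  rw [ENNReal.iInf_add]
  refine le_iInf fun γ₁ => ?_
  rw [ENNReal.add_iInf]
  refine le_iInf fun γ₂ => ?_
  by_cases h₁ : γ₁.map Prod.fst = μ₁ ∧ γ₁.map Prod.snd = ν₁
  · by_cases h₂ : γ₂.map Prod.fst = μ₂ ∧ γ₂.map Prod.snd = ν₂
    · rw [iInf_pos h₁, iInf_pos h₂]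
      refine (W1_le_coupling (γ₁ + γ₂) ⟨?_, ?_⟩).trans ?_
      · rw [Measure.map_add _ _ measurable_fst, h₁.1, h₂.1]
      · rw [Measure.map_add _ _ measurable_snd, h₁.2, h₂.2]
      · rw [lintegral_add_measure]
    · rw [iInf_neg h₂]
      simp
  · rw [iInf_neg h₁]
    simp
lemma W1_smul_le {μ ν : Measure ℝ} (c : ℝ≥0∞) (hc0 : c ≠ 0) (hc : c ≠ ∞) :
    W1 (c • μ) (c • ν) ≤ c * W1 μ ν := by
  conv_rhs => rw [W1]
  rw [ENNReal.mul_iInf_of_ne hc0 hc]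
  refine le_iInf fun γ => ?_
  rw [ENNReal.mul_iInf_of_ne hc0 hc]
  refine le_iInf fun h => ?_
  refine (W1_le_coupling (c • γ) ⟨?_, ?_⟩).trans ?_
  · rw [Measure.map_smul, h.1]
  · rw [Measure.map_smul, h.2]
  · rw [lintegral_smul_measure, smul_eq_mul]

variable {μ : Measure ℝ} {s : Set ℝ}


lemma condOn_isProb [IsFiniteMeasure μ] (hs : μ s ≠ 0) :
    IsProbabilityMeasure (condOn μ s) := by
  constructor
  rw [condOn, Measure.smul_apply, Measure.restrict_apply_univ, smul_eq_mul]
  exact ENNReal.inv_mul_cancel hs (measure_ne_top _ _)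

lemma condOn_noAtoms [NullSingletonClass μ] : NoAtoms (condOn μ s) := by
  constructor
  intro x
  rw [condOn, Measure.smul_apply, Measure.restrict_apply (measurableSet_singleton x)]
  have : μ ({x} ∩ s) = 0 := measure_mono_null Set.inter_subset_left (measure_singleton x)
  rw [this, smul_eq_mul, mul_zero]

lemma condOn_smul [IsFiniteMeasure μ] (hs : μ s ≠ 0) :
    μ s • condOn μ s = μ.restrict s := by
  rw [condOn, smul_smul, ENNReal.mul_inv_cancel hs (measure_ne_top _ _), one_smul]

lemma condOn_null (t : Set ℝ) (ht : MeasurableSet t) (h : μ (t ∩ s) = 0) :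
    condOn μ s t = 0 := by
  rw [condOn, Measure.smul_apply, Measure.restrict_apply ht, h, smul_eq_mul, mul_zero]

lemma condOn_integral [IsFiniteMeasure μ] (hs : μ s ≠ 0) (f : ℝ → ℝ) :
    (μ s).toReal * ∫ t, f t ∂(condOn μ s) = ∫ t in s, f t ∂μ := by
  rw [condOn, integral_smul_measure, smul_eq_mul, ← mul_assoc,
    ENNReal.toReal_inv, mul_inv_cancel₀, one_mul]
  exact ENNReal.toReal_ne_zero.2 ⟨hs, measure_ne_top _ _⟩

end Aux

section Main
variable {μ : Measure ℝ} {a b : ℝ}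

lemma not_ae_eq [IsProbabilityMeasure μ] [NullSingletonClass μ] (m : ℝ) : ¬ (∀ᵐ x ∂μ, x = m) := by
  intro h
  have h1 : μ {x | ¬ x = m} = 0 := by rw [← ae_iff]; exact h
  have h2 : μ {x | x = m} = 0 := by
    have : {x : ℝ | x = m} = {m} := by ext x; simp
    rw [this]; exact measure_singleton m
  have h3 : μ Set.univ = 0 := by
    refine le_antisymm ?_ zero_le
    calc μ Set.univ ≤ μ ({x | x = m} ∪ {x | ¬ x = m}) := by
          refine measure_mono fun x _ => ?_
          by_cases hx : x = m
          · exact Or.inl hx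
          · exact Or.inr hx
      _ ≤ μ {x | x = m} + μ {x | ¬ x = m} := measure_union_le _ _
      _ = 0 := by rw [h1, h2, add_zero]
  rw [measure_univ] at h3
  exact one_ne_zero h3

lemma split_pos [IsProbabilityMeasure μ] [NullSingletonClass μ] (hsupp : μ (Set.Icc a b)ᶜ = 0) :
    μ {x : ℝ | x ≤ ∫ t, t ∂μ} ≠ 0 ∧ μ {x : ℝ | (∫ t, t ∂μ) < x} ≠ 0 := by
  set m := ∫ t, t ∂μ with hm
  have hid := integrable_id' hsupp
  constructor
  · intro h
    have hae : ∀ᵐ x ∂μ, m < x := by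
      rw [ae_iff]
      have : {x : ℝ | ¬ m < x} = {x : ℝ | x ≤ m} := by ext x; simp
      rw [this]; exact h
    have hInt : Integrable (fun x => x - m) μ := hid.sub (integrable_const m)
    have hz : ∫ x, (x - m) ∂μ = 0 := by
      rw [integral_sub hid (integrable_const m), integral_const]; simp [hm]
    have hnn : 0 ≤ᵐ[μ] fun x => x - m := hae.mono fun x hx => by
      simp only [Pi.zero_apply]; linarith
    have h0 := (integral_eq_zero_iff_of_nonneg_ae hnn hInt).1 hz
    have heq : ∀ᵐ x ∂μ, x = m := h0.mono fun x hx => by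
      simpa [sub_eq_zero] using hx
    exact not_ae_eq m heq
  · intro h
    have hae : ∀ᵐ x ∂μ, x ≤ m := by
      rw [ae_iff]
      have : {x : ℝ | ¬ x ≤ m} = {x : ℝ | m < x} := by ext x; simp
      rw [this]; exact h
    have hInt : Integrable (fun x => m - x) μ := (integrable_const m).sub hid
    have hz : ∫ x, (m - x) ∂μ = 0 := by
      rw [integral_sub (integrable_const m) hid, integral_const]; simp [hm]
    have hnn : 0 ≤ᵐ[μ] fun x => m - x := hae.mono fun x hx => by
      simp only [Pi.zero_apply]; linarith
    have h0 := (integral_eq_zero_iff_of_nonneg_ae hnn hInt).1 hz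
    have heq : ∀ᵐ x ∂μ, x = m := h0.mono fun x hx => by
      have : m - x = 0 := hx
      linarith
    exact not_ae_eq m heq

lemma key_bound : ∀ (n : ℕ) (μ : Measure ℝ), IsProbabilityMeasure μ → NullSingletonClass μ →
    ∀ a b : ℝ, a ≤ b → μ (Set.Icc a b)ᶜ = 0 →
    W1 μ (T (fun ν => ∫ t, t ∂ν) n μ)
      ≤ ENNReal.ofReal (Real.sqrt (((∫ t, t ∂μ) - a) * (b - ∫ t, t ∂μ)) / 2 ^ n) := by
  intro n
  induction n with
  | zero =>
    intro μ hprob hatom a b hab hsupp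
    haveI := hprob; haveI := hatom
    have hT : T (fun ν => ∫ t, t ∂ν) 0 μ = Measure.dirac (∫ t, t ∂μ) := rfl
    rw [hT, pow_zero, div_one]
    have hint : Integrable (fun x => |x - ∫ t, t ∂μ|) μ :=
      ((integrable_id' hsupp).sub (integrable_const _)).abs
    exact (W1_dirac_le _ hint).trans (ENNReal.ofReal_le_ofReal (E_le_sqrt hsupp))
  | succ n ih =>
    intro μ hprob hatom a b hab hsupp
    haveI := hprob; haveI := hatom
    set m := ∫ t, t ∂μ with hm
    obtain ⟨hma, hmb⟩ := mean_mem_Icc hsupp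
    obtain ⟨hP, hQ⟩ := split_pos hsupp
    set lo : Set ℝ := {x | x ≤ m} with hlo
    set hi : Set ℝ := {x | m < x} with hhi
    have hloM : MeasurableSet lo := measurableSet_Iic
    have hhiM : MeasurableSet hi := measurableSet_Ioi
    have hcompl : hi = loᶜ := by ext x; simp [hlo, hhi, not_le]
    have hT : T (fun ν => ∫ t, t ∂ν) (n+1) μ
        = μ lo • T (fun ν => ∫ t, t ∂ν) n (condOn μ lo)
          + μ hi • T (fun ν => ∫ t, t ∂ν) n (condOn μ hi) := by
      show (if μ lo = 0 ∨ μ hi = 0 then _ else _) = _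
      rw [if_neg (by push_neg; exact ⟨hP, hQ⟩)]
    set μm := condOn μ lo with hμm
    set μp := condOn μ hi with hμp
    haveI : IsProbabilityMeasure μm := condOn_isProb hP
    haveI : IsProbabilityMeasure μp := condOn_isProb hQ
    haveI : NullSingletonClass μm := condOn_noAtoms
    haveI : NullSingletonClass μp := condOn_noAtoms
    have hdecomp : μ lo • μm + μ hi • μp = μ := by
      rw [hμm, hμp, condOn_smul hP, condOn_smul hQ, hcompl,
        Measure.restrict_add_restrict_compl hloM]
    -- supports of the conditional measures
    have hsupp_lo : μm (Set.Icc a m)ᶜ = 0 := by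
      refine condOn_null _ measurableSet_Icc.compl (measure_mono_null ?_ hsupp)
      rintro x ⟨hx1, hx2⟩
      have hx2' : x ≤ m := hx2
      simp only [Set.mem_compl_iff, Set.mem_Icc, not_and, not_le] at hx1 ⊢
      intro hax
      exact absurd (hx1 hax) (not_lt.2 hx2')
    have hsupp_hi : μp (Set.Icc m b)ᶜ = 0 := by
      refine condOn_null _ measurableSet_Icc.compl (measure_mono_null ?_ hsupp)
      rintro x ⟨hx1, hx2⟩
      have hx2' : m < x := hx2
      simp only [Set.mem_compl_iff, Set.mem_Icc, not_and, not_le] at hx1 ⊢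
      intro _
      exact hx1 hx2'.le
    rw [← hm] at hma hmb
    -- means of the conditional measures
    set mm := ∫ t, t ∂μm with hmm
    set mp := ∫ t, t ∂μp with hmp
    obtain ⟨h1, h2⟩ := mean_mem_Icc (μ := μm) hsupp_lo
    obtain ⟨h3, h4⟩ := mean_mem_Icc (μ := μp) hsupp_hi
    rw [← hmm] at h1 h2
    rw [← hmp] at h3 h4
    set P := (μ lo).toReal with hPdef
    set Q := (μ hi).toReal with hQdef
    have hloTop : μ lo ≠ ⊤ := measure_ne_top _ _
    have hhiTop : μ hi ≠ ⊤ := measure_ne_top _ _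
    have hPQ1 : P + Q = 1 := by
      rw [hPdef, hQdef, ← ENNReal.toReal_add hloTop hhiTop, hcompl,
        measure_add_measure_compl hloM]
      simp
    have hid := integrable_id' hsupp
    have hmean : P * mm + Q * mp = m := by
      rw [hPdef, hQdef, hmm, hmp, hμm, hμp, condOn_integral hP, condOn_integral hQ,
        hcompl, hm]
      exact integral_add_compl hloM hid
    have hc : P * (m - mm) = Q * (mp - m) := by linear_combination m * hPQ1 - hmean
    have harith := step_arith a b m mm mp P Q h1 h2 h3 h4
      ENNReal.toReal_nonneg ENNReal.toReal_nonneg hPQ1 hc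
    have ihm := ih μm (by infer_instance) (by infer_instance) a m hma hsupp_lo
    have ihp := ih μp (by infer_instance) (by infer_instance) m b hmb hsupp_hi
    rw [← hmm] at ihm
    rw [← hmp] at ihp
    have hs1 : (0:ℝ) ≤ Real.sqrt ((mm - a) * (m - mm)) / 2 ^ n := by positivity
    have hs2 : (0:ℝ) ≤ Real.sqrt ((mp - m) * (b - mp)) / 2 ^ n := by positivity
    calc W1 μ (T (fun ν => ∫ t, t ∂ν) (n+1) μ)
        ≤ μ lo * W1 μm (T (fun ν => ∫ t, t ∂ν) n μm)
          + μ hi * W1 μp (T (fun ν => ∫ t, t ∂ν) n μp) := by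
          rw [hT]
          refine le_trans ?_ (add_le_add (W1_smul_le _ hP hloTop) (W1_smul_le _ hQ hhiTop))
          have h := W1_add_le (μ₁ := μ lo • μm) (μ₂ := μ hi • μp)
            (ν₁ := μ lo • T (fun ν => ∫ t, t ∂ν) n μm)
            (ν₂ := μ hi • T (fun ν => ∫ t, t ∂ν) n μp)
          rw [hdecomp] at h
          exact h
      _ ≤ μ lo * ENNReal.ofReal (Real.sqrt ((mm - a) * (m - mm)) / 2 ^ n)
          + μ hi * ENNReal.ofReal (Real.sqrt ((mp - m) * (b - mp)) / 2 ^ n) :=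
          add_le_add (mul_le_mul_right ihm _) (mul_le_mul_right ihp _)
      _ = ENNReal.ofReal (P * (Real.sqrt ((mm - a) * (m - mm)) / 2 ^ n))
          + ENNReal.ofReal (Q * (Real.sqrt ((mp - m) * (b - mp)) / 2 ^ n)) := by
          rw [← ENNReal.ofReal_toReal hloTop, ← ENNReal.ofReal_toReal hhiTop,
            ← ENNReal.ofReal_mul ENNReal.toReal_nonneg,
            ← ENNReal.ofReal_mul ENNReal.toReal_nonneg]
      _ = ENNReal.ofReal (P * (Real.sqrt ((mm - a) * (m - mm)) / 2 ^ n)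
          + Q * (Real.sqrt ((mp - m) * (b - mp)) / 2 ^ n)) :=
          (ENNReal.ofReal_add (mul_nonneg ENNReal.toReal_nonneg hs1)
            (mul_nonneg ENNReal.toReal_nonneg hs2)).symm
      _ ≤ ENNReal.ofReal (Real.sqrt ((m - a) * (b - m)) / 2 ^ (n+1)) := by
          refine ENNReal.ofReal_le_ofReal ?_
          have h2n : (0:ℝ) < 2 ^ n := by positivity
          calc P * (Real.sqrt ((mm - a) * (m - mm)) / 2 ^ n)
              + Q * (Real.sqrt ((mp - m) * (b - mp)) / 2 ^ n)
              = (P * Real.sqrt ((mm - a) * (m - mm))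
                + Q * Real.sqrt ((mp - m) * (b - mp))) / 2 ^ n := by ring
            _ ≤ (Real.sqrt ((m - a) * (b - m)) / 2) / 2 ^ n :=
                (div_le_div_iff_of_pos_right h2n).2 harith
            _ = Real.sqrt ((m - a) * (b - m)) / 2 ^ (n+1) := by
                rw [div_div, ← pow_succ']
end Main

theorem W1_meanSplit_le (μ : Measure ℝ) [IsProbabilityMeasure μ] [NullSingletonClass μ]
    (a b : ℝ) (hab : a < b) (hsupp : μ (Set.Icc a b)ᶜ = 0) (n : ℕ) :
    W1 μ (T (fun ν => ∫ t, t ∂ν) n μ) ≤ ENNReal.ofReal ((b - a) / 2 ^ (n + 1)) := by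
  refine (key_bound n μ inferInstance inferInstance a b hab.le hsupp).trans
    (ENNReal.ofReal_le_ofReal ?_)
  obtain ⟨hma, hmb⟩ := mean_mem_Icc hsupp
  have hsq : Real.sqrt (((∫ t, t ∂μ) - a) * (b - ∫ t, t ∂μ)) ≤ (b - a) / 2 :=
    (sqrt_mul_le _ _ (by linarith) (by linarith)).trans (by linarith)
  have h2n : (0:ℝ) < 2 ^ n := by positivity
  calc Real.sqrt (((∫ t, t ∂μ) - a) * (b - ∫ t, t ∂μ)) / 2 ^ n
      ≤ ((b - a) / 2) / 2 ^ n := (div_le_div_iff_of_pos_right h2n).2 hsq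
    _ = (b - a) / 2 ^ (n + 1) := by rw [div_div, ← pow_succ']
end

section
/- Let μ be a continuous probability measure with supp(μ) ⊆ [a,b], −∞ < a < b < ∞, and let T be the median-split quantization algorithm (split function f(μ) = median of μ). Then for every n ≥ 0, W₁(μ, T(μ,n)) ≤ (b−a)/2^n. -/
open MeasureTheory
open scoped ENNReal NNReal

lemma W1_le_dirac (μ : Measure ℝ) [IsProbabilityMeasure μ] (m : ℝ) :
    W1 μ (Measure.dirac m) ≤ ∫⁻ x, edist x m ∂μ := by
  have hmeas : Measurable (fun x : ℝ => (x, m)) := measurable_id.prodMk measurable_const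
  have h1 : (μ.map (fun x : ℝ => (x, m))).map Prod.fst = μ := by
    rw [Measure.map_map measurable_fst hmeas]; simp [Function.comp_def]
  have h2 : (μ.map (fun x : ℝ => (x, m))).map Prod.snd = Measure.dirac m := by
    rw [Measure.map_map measurable_snd hmeas]
    simp [Function.comp_def, Measure.map_const]
  refine le_trans (iInf₂_le (μ.map (fun x : ℝ => (x, m))) ⟨h1, h2⟩) ?_
  rw [lintegral_map (measurable_fst.edist measurable_snd) hmeas]

lemma W1_combine (c : ℝ≥0∞) (hc0 : c ≠ 0) (hc : c ≠ ⊤) (μ₁ μ₂ ν₁ ν₂ : Measure ℝ) :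
    W1 (c • μ₁ + c • μ₂) (c • ν₁ + c • ν₂) ≤ c * W1 μ₁ ν₁ + c * W1 μ₂ ν₂ := by
  simp_rw [W1, ENNReal.mul_iInf_of_ne hc0 hc, ENNReal.iInf_add, ENNReal.add_iInf]
  refine le_iInf fun γ₁ => le_iInf fun h₁ => le_iInf fun γ₂ => le_iInf fun h₂ => ?_
  refine le_trans (iInf₂_le (c • γ₁ + c • γ₂) ?_) ?_
  · constructor
    · rw [Measure.map_add _ _ measurable_fst, Measure.map_smul, Measure.map_smul, h₁.1, h₂.1]
    · rw [Measure.map_add _ _ measurable_snd, Measure.map_smul, Measure.map_smul, h₁.2, h₂.2]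
  · rw [lintegral_add_measure, lintegral_smul_measure, lintegral_smul_measure, smul_eq_mul, smul_eq_mul]

lemma noAtoms_smul (c : ℝ≥0∞) (μ : Measure ℝ) [NullSingletonClass μ] : NullSingletonClass (c • μ) :=
  ⟨fun x => by simp [Measure.smul_apply, measure_singleton]⟩

noncomputable def medOf (ν : Measure ℝ) : ℝ := sInf {x : ℝ | (1 : ℝ≥0∞) / 2 ≤ ν (Set.Iic x)}

lemma median_facts (μ : Measure ℝ) [IsProbabilityMeasure μ] [NullSingletonClass μ]
    (a b : ℝ) (hab : a < b) (hsupp : μ (Set.Icc a b)ᶜ = 0) :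
    μ (Set.Iic (medOf μ)) = 1/2 ∧ a < medOf μ ∧ medOf μ < b := by
  set S := {x : ℝ | (1 : ℝ≥0∞) / 2 ≤ μ (Set.Iic x)} with hS
  have hIicb : μ (Set.Iic b) = 1 := by
    have h0 : μ (Set.Ioi b) = 0 := by
      refine measure_mono_null ?_ hsupp
      intro x hx; simp only [Set.mem_compl_iff, Set.mem_Icc, Set.mem_Ioi] at *
      intro h; linarith [h.2]
    have := measure_add_measure_compl (μ := μ) (measurableSet_Iic (a := b))
    rw [Set.compl_Iic, h0, add_zero, measure_univ] at this
    exact this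
  have hIica : μ (Set.Iic a) = 0 := by
    have h1 : μ (Set.Iio a) = 0 := by
      refine measure_mono_null ?_ hsupp
      intro x hx; simp only [Set.mem_compl_iff, Set.mem_Icc, Set.mem_Iio] at *
      intro h; linarith
    calc μ (Set.Iic a) = μ (Set.Iio a) := (measure_congr (Iio_ae_eq_Iic (a := a))).symm
    _ = 0 := h1
  have hbS : b ∈ S := by
    simp only [hS, Set.mem_setOf_eq, hIicb]
    exact le_trans (by norm_num) le_rfl
  have hSne : S.Nonempty := ⟨b, hbS⟩
  have hbdd : BddBelow S := by
    refine ⟨a, fun x hx => ?_⟩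
    by_contra hlt; push_neg at hlt
    have h0 : μ (Set.Iic x) = 0 := measure_mono_null (Set.Iic_subset_Iic.mpr hlt.le) hIica
    have hx' : (1:ℝ≥0∞)/2 ≤ μ (Set.Iic x) := hx
    rw [h0] at hx'
    simp at hx'
  set m := medOf μ with hm
  have hma : a ≤ m := le_csInf hSne (fun x hx => by
    by_contra hlt; push_neg at hlt
    have h0 : μ (Set.Iic x) = 0 := measure_mono_null (Set.Iic_subset_Iic.mpr hlt.le) hIica
    have hx' : (1:ℝ≥0∞)/2 ≤ μ (Set.Iic x) := hx
    rw [h0] at hx'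
    simp at hx')
  have hmb : m ≤ b := csInf_le hbdd hbS
  -- μ (Iic m) ≥ 1/2
  have hge : (1:ℝ≥0∞)/2 ≤ μ (Set.Iic m) := by
    have hset : ⋂ n : ℕ, Set.Iic (m + ((n:ℝ)+1)⁻¹) = Set.Iic m := by
      ext x
      simp only [Set.mem_iInter, Set.mem_Iic]
      constructor
      · intro h; by_contra hx; push_neg at hx
        obtain ⟨n, hn⟩ := exists_nat_one_div_lt (sub_pos.mpr hx)
        rw [one_div] at hn
        linarith [h n]
      · intro h n
        have : (0:ℝ) < ((n:ℝ)+1)⁻¹ := by positivity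
        linarith
    have hanti : Antitone (fun n : ℕ => Set.Iic (m + ((n:ℝ)+1)⁻¹)) := by
      intro i j hij
      apply Set.Iic_subset_Iic.mpr
      have hc : (i:ℝ) ≤ (j:ℝ) := Nat.cast_le.mpr hij
      have : ((j:ℝ)+1)⁻¹ ≤ ((i:ℝ)+1)⁻¹ := by
        apply inv_anti₀ (by positivity); linarith
      linarith
    have := hanti.measure_iInter (μ := μ)
      (fun n => (measurableSet_Iic).nullMeasurableSet)
      ⟨0, measure_ne_top μ _⟩
    rw [hset] at this
    rw [this]
    refine le_iInf fun n => ?_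
    have hpos : m < m + ((n:ℝ)+1)⁻¹ := by
      have : (0:ℝ) < ((n:ℝ)+1)⁻¹ := by positivity
      linarith
    obtain ⟨s, hsS, hslt⟩ := (csInf_lt_iff hbdd hSne).mp hpos
    exact le_trans hsS (measure_mono (Set.Iic_subset_Iic.mpr hslt.le))
  -- μ (Iic m) ≤ 1/2
  have hle : μ (Set.Iic m) ≤ (1:ℝ≥0∞)/2 := by
    rcases eq_or_lt_of_le hma with heq | hlt
    · have h0 : μ (Set.Iic m) = 0 := by rw [← heq]; exact hIica
      rw [h0]; exact zero_le
    · have hset : ⋃ n : ℕ, Set.Iic (m - ((n:ℝ)+1)⁻¹) = Set.Iio m := by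
        ext x
        simp only [Set.mem_iUnion, Set.mem_Iic, Set.mem_Iio]
        constructor
        · rintro ⟨n, hn⟩
          have : (0:ℝ) < ((n:ℝ)+1)⁻¹ := by positivity
          linarith
        · intro hx
          obtain ⟨n, hn⟩ := exists_nat_one_div_lt (sub_pos.mpr hx)
          rw [one_div] at hn
          exact ⟨n, by linarith⟩
      have hmono : Monotone (fun n : ℕ => Set.Iic (m - ((n:ℝ)+1)⁻¹)) := by
        intro i j hij
        apply Set.Iic_subset_Iic.mpr
        have hc : (i:ℝ) ≤ (j:ℝ) := Nat.cast_le.mpr hij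
        have : ((j:ℝ)+1)⁻¹ ≤ ((i:ℝ)+1)⁻¹ := by
          apply inv_anti₀ (by positivity); linarith
        linarith
      have hU := hmono.measure_iUnion (μ := μ)
      rw [hset] at hU
      have hIio : μ (Set.Iic m) = μ (Set.Iio m) := (measure_congr (Iio_ae_eq_Iic (a := m))).symm
      rw [hIio, hU]
      refine iSup_le fun n => ?_
      have hnot : m - ((n:ℝ)+1)⁻¹ ∉ S := by
        intro hmem
        have h2 : m ≤ m - ((n:ℝ)+1)⁻¹ := csInf_le hbdd hmem
        have hpos : (0:ℝ) < ((n:ℝ)+1)⁻¹ := by positivity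
        linarith
      rw [hS, Set.mem_setOf_eq, not_le] at hnot
      exact hnot.le
  have hhalf : μ (Set.Iic m) = 1/2 := le_antisymm hle hge
  refine ⟨hhalf, ?_, ?_⟩
  · rcases eq_or_lt_of_le hma with heq | hlt
    · exfalso
      have h0 : μ (Set.Iic m) = 0 := by rw [← heq]; exact hIica
      rw [h0] at hhalf
      have hne : (1:ℝ≥0∞)/2 ≠ 0 := by simp
      exact hne hhalf.symm
    · exact hlt
  · rcases eq_or_lt_of_le hmb with heq | hlt
    · exfalso
      rw [heq, hIicb] at hhalf
      have : (1:ℝ≥0∞)/2 < 1 := by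
        rw [one_div]
        exact ENNReal.inv_lt_one.mpr (by norm_num)
      rw [← hhalf] at this
      exact lt_irrefl _ this
    · exact hlt

lemma main_bound (n : ℕ) : ∀ (μ : Measure ℝ) [IsProbabilityMeasure μ] [NullSingletonClass μ] (a b : ℝ),
    a < b → μ (Set.Icc a b)ᶜ = 0 →
    W1 μ (T medOf n μ) ≤ ENNReal.ofReal ((b - a) / 2 ^ n) := by
  induction n with
  | zero =>
    intro μ _ _ a b hab hsupp
    obtain ⟨hhalf, ham, hmb⟩ := median_facts μ a b hab hsupp
    set m := medOf μ
    have h0 : T medOf 0 μ = Measure.dirac m := rfl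
    rw [h0]
    refine le_trans (W1_le_dirac μ m) ?_
    have hae : ∀ᵐ x ∂μ, x ∈ Set.Icc a b := by
      rw [ae_iff]
      exact hsupp
    have hbd : ∀ᵐ x ∂μ, edist x m ≤ ENNReal.ofReal (b - a) := by
      refine hae.mono fun x hx => ?_
      rw [edist_dist]
      exact ENNReal.ofReal_le_ofReal (Real.dist_le_of_mem_Icc hx ⟨ham.le, hmb.le⟩)
    calc ∫⁻ x, edist x m ∂μ ≤ ∫⁻ _, ENNReal.ofReal (b - a) ∂μ := lintegral_mono_ae hbd
    _ = ENNReal.ofReal (b - a) := by simp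
    _ = ENNReal.ofReal ((b - a) / 2 ^ 0) := by norm_num
  | succ n ih =>
    intro μ _ _ a b hab hsupp
    obtain ⟨hhalf, ham, hmb⟩ := median_facts μ a b hab hsupp
    set m := medOf μ with hmdef
    have hIic : {x : ℝ | x ≤ m} = Set.Iic m := rfl
    have hIoi : {x : ℝ | m < x} = Set.Ioi m := rfl
    have hs1 : μ {x : ℝ | x ≤ m} = 1/2 := hhalf
    have hs2 : μ {x : ℝ | m < x} = 1/2 := by
      rw [hIoi, ← Set.compl_Iic, measure_compl measurableSet_Iic (measure_ne_top μ _),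
        measure_univ, hhalf]
      rw [show (1:ℝ≥0∞) - 1/2 = 1/2 from ENNReal.sub_half ENNReal.one_ne_top]
    set μm := condOn μ {x : ℝ | x ≤ m} with hμm
    set μp := condOn μ {x : ℝ | m < x} with hμp
    have hT : T medOf (n+1) μ = (1/2 : ℝ≥0∞) • T medOf n μm + (1/2 : ℝ≥0∞) • T medOf n μp := by
      show (if μ {x | x ≤ medOf μ} = 0 ∨ μ {x | medOf μ < x} = 0 then Measure.dirac (medOf μ)
        else μ {x | x ≤ medOf μ} • T medOf n (condOn μ {x | x ≤ medOf μ}) +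
          μ {x | medOf μ < x} • T medOf n (condOn μ {x | medOf μ < x})) = _
    
      rw [if_neg, ← hmdef, hs1, hs2]
      push_neg
      rw [← hmdef, hs1, hs2]
      norm_num
    have hresm : μ.restrict (Set.Iic m) + μ.restrict (Set.Ioi m) = μ := by
      rw [← Set.compl_Iic]
      exact Measure.restrict_add_restrict_compl measurableSet_Iic
    have hdec : μ = (1/2 : ℝ≥0∞) • μm + (1/2 : ℝ≥0∞) • μp := by
      rw [hμm, hμp, condOn, condOn, hs1, hs2, hIic, hIoi, smul_smul, smul_smul,
        ENNReal.mul_inv_cancel (by norm_num) (by norm_num), one_smul, one_smul, hresm]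
    haveI hPm : IsProbabilityMeasure μm := by
      constructor
      rw [hμm, condOn, Measure.smul_apply, Measure.restrict_apply_univ, hs1, smul_eq_mul]
      exact ENNReal.inv_mul_cancel (by norm_num) (by norm_num)
    haveI hPp : IsProbabilityMeasure μp := by
      constructor
      rw [hμp, condOn, Measure.smul_apply, Measure.restrict_apply_univ, hs2, smul_eq_mul]
      exact ENNReal.inv_mul_cancel (by norm_num) (by norm_num)
    haveI hNm : NullSingletonClass μm := by rw [hμm, condOn]; exact noAtoms_smul _ _
    haveI hNp : NullSingletonClass μp := by rw [hμp, condOn]; exact noAtoms_smul _ _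
    have hsuppm : μm (Set.Icc a m)ᶜ = 0 := by
      rw [hμm, condOn, Measure.smul_apply, hIic,
        Measure.restrict_apply (measurableSet_Icc.compl)]
      have : (Set.Icc a m)ᶜ ∩ Set.Iic m ⊆ (Set.Icc a b)ᶜ := by
        intro x hx
        simp only [Set.mem_inter_iff, Set.mem_compl_iff, Set.mem_Icc, Set.mem_Iic] at *
        intro h
        exact absurd ⟨h.1, hx.2⟩ hx.1
      rw [measure_mono_null this hsupp, smul_eq_mul, mul_zero]
    have hsuppp : μp (Set.Icc m b)ᶜ = 0 := by
      rw [hμp, condOn, Measure.smul_apply, hIoi,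
        Measure.restrict_apply (measurableSet_Icc.compl)]
      have : (Set.Icc m b)ᶜ ∩ Set.Ioi m ⊆ (Set.Icc a b)ᶜ := by
        intro x hx
        simp only [Set.mem_inter_iff, Set.mem_compl_iff, Set.mem_Icc, Set.mem_Ioi] at *
        intro h
        exact absurd ⟨hx.2.le, h.2⟩ hx.1
      rw [measure_mono_null this hsupp, smul_eq_mul, mul_zero]
    calc W1 μ (T medOf (n+1) μ)
        = W1 ((1/2 : ℝ≥0∞) • μm + (1/2 : ℝ≥0∞) • μp)
            ((1/2 : ℝ≥0∞) • T medOf n μm + (1/2 : ℝ≥0∞) • T medOf n μp) := by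
          rw [← hdec, ← hT]
      _ ≤ (1/2 : ℝ≥0∞) * W1 μm (T medOf n μm) + (1/2 : ℝ≥0∞) * W1 μp (T medOf n μp) :=
          W1_combine _ (by norm_num) (by norm_num) _ _ _ _
      _ ≤ (1/2 : ℝ≥0∞) * ENNReal.ofReal ((m - a) / 2 ^ n)
            + (1/2 : ℝ≥0∞) * ENNReal.ofReal ((b - m) / 2 ^ n) := by
          gcongr
          · exact ih μm a m ham hsuppm
          · exact ih μp m b hmb hsuppp
      _ = ENNReal.ofReal ((b - a) / 2 ^ (n+1)) := by
          have h2 : (1/2 : ℝ≥0∞) = ENNReal.ofReal (1/2) := by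
            rw [ENNReal.ofReal_div_of_pos (by norm_num)]
            norm_num
          rw [h2, ← ENNReal.ofReal_mul (by norm_num), ← ENNReal.ofReal_mul (by norm_num),
            ← ENNReal.ofReal_add
              (mul_nonneg (by norm_num) (div_nonneg (by linarith) (by positivity)))
              (mul_nonneg (by norm_num) (div_nonneg (by linarith) (by positivity)))]
          congr 1
          rw [pow_succ]
          field_simp
          ring

theorem W1_medianSplit_le (μ : Measure ℝ) [IsProbabilityMeasure μ] [NullSingletonClass μ]
    (a b : ℝ) (hab : a < b) (hsupp : μ (Set.Icc a b)ᶜ = 0) (n : ℕ) :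
    W1 μ (T (fun ν => sInf {x : ℝ | (1 : ℝ≥0∞) / 2 ≤ ν (Set.Iic x)}) n μ) ≤
      ENNReal.ofReal ((b - a) / 2 ^ n) := by
  exact main_bound n μ a b hab hsupp
end
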